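/- Let A be a finite-dimensional central simple algebra over a field F and E a commutative subfield of A containing F with dim_F(A) = (dim_F E)². Then E is a maximal subfield of A, i.e. the centralizer of E in A equals E. -/

import Mathlib

open Module

/-- Artin–Whaples style lemma: in a central simple `F`-algebra, if `w` is an
`F`-linearly independent family and `∑ i ∈ s, w i * x * a i = 0` for every `x`,
then every `a i` is zero. -/
lemma artin_relations {F A : Type*} [Field F] [Ring A] [Algebra F A]
    [Algebra.IsCentral F A] [IsSimpleRing A]
    {ι : Type*} {w : ι → A} (hw : LinearIndependent F w) :
    ∀ (s : Finset ι) (a : ι → A), (∀ i ∉ s, a i = 0) →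
      (∀ x : A, ∑ i ∈ s, w i * x * a i = 0) → ∀ i, a i = 0 := by
  classical
  intro s
  induction s using Finset.strongInduction with
  | _ s ih =>
    intro a ha0 hrel
    by_contra hne
    push_neg at hne
    obtain ⟨i₀, hi₀⟩ := hne
    have hi₀s : i₀ ∈ s := by by_contra h; exact hi₀ (ha0 _ h)
    set gens : Set (ι → A) := {c | ∃ u v : A, c = fun i => u * a i * v} with hgens
    set W : AddSubgroup (ι → A) := AddSubgroup.closure gens with hWdef
    have hmemW : ∀ c ∈ W, (∀ i ∉ s, c i = 0) ∧ (∀ x : A, ∑ i ∈ s, w i * x * c i = 0) := by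
      intro c hc
      induction hc using AddSubgroup.closure_induction with
      | mem c hc =>
        obtain ⟨u, v, rfl⟩ := hc
        refine ⟨fun i hi => by simp [ha0 i hi], fun x => ?_⟩
        have h1 := hrel (x * u)
        calc ∑ i ∈ s, w i * x * (u * a i * v)
            = (∑ i ∈ s, w i * (x * u) * a i) * v := by
              rw [Finset.sum_mul]
              exact Finset.sum_congr rfl fun i _ => by simp [mul_assoc]
          _ = 0 := by rw [h1, zero_mul]
      | zero => exact ⟨fun i _ => rfl, fun x => by simp⟩
      | add c d _ _ hcP hdP =>
        refine ⟨fun i hi => ?_, fun x => ?_⟩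
        · show c i + d i = 0
          rw [hcP.1 i hi, hdP.1 i hi, add_zero]
        · have : ∀ i, w i * x * (c + d) i = w i * x * c i + w i * x * d i := by
            intro i; show w i * x * (c i + d i) = _; rw [mul_add]
          simp only [this, Finset.sum_add_distrib, hcP.2 x, hdP.2 x, add_zero]
      | neg c _ hcP =>
        refine ⟨fun i hi => ?_, fun x => ?_⟩
        · show -(c i) = 0; rw [hcP.1 i hi, neg_zero]
        · have : ∀ i, w i * x * (-c) i = -(w i * x * c i) := by
            intro i; show w i * x * (-(c i)) = _; rw [mul_neg]
          simp only [this, Finset.sum_neg_distrib, hcP.2 x, neg_zero]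
    have hmul : ∀ (r : A), ∀ c ∈ W, (fun i => r * c i) ∈ W ∧ (fun i => c i * r) ∈ W := by
      intro r c hc
      induction hc using AddSubgroup.closure_induction with
      | mem c hc =>
        obtain ⟨u, v, rfl⟩ := hc
        constructor
        · exact AddSubgroup.subset_closure ⟨r * u, v, funext fun i => by simp [mul_assoc]⟩
        · exact AddSubgroup.subset_closure ⟨u, v * r, funext fun i => by simp [mul_assoc]⟩
      | zero =>
        constructor
        · have : (fun i => r * (0 : ι → A) i) = 0 := funext fun i => by
            show r * 0 = 0; rw [mul_zero]
          rw [this]; exact W.zero_mem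
        · have : (fun i => (0 : ι → A) i * r) = 0 := funext fun i => by
            show 0 * r = 0; rw [zero_mul]
          rw [this]; exact W.zero_mem
      | add c d hcW hdW hcP hdP =>
        constructor
        · have : (fun i => r * (c + d) i) = (fun i => r * c i) + fun i => r * d i := by
            funext i; show r * (c i + d i) = r * c i + r * d i; rw [mul_add]
          rw [this]; exact W.add_mem hcP.1 hdP.1
        · have : (fun i => (c + d) i * r) = (fun i => c i * r) + fun i => d i * r := by
            funext i; show (c i + d i) * r = c i * r + d i * r; rw [add_mul]
          rw [this]; exact W.add_mem hcP.2 hdP.2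
      | neg c hcW hcP =>
        constructor
        · have : (fun i => r * (-c) i) = -(fun i => r * c i) := by
            funext i; show r * (-(c i)) = -(r * c i); rw [mul_neg]
          rw [this]; exact W.neg_mem hcP.1
        · have : (fun i => (-c) i * r) = -(fun i => c i * r) := by
            funext i; show (-(c i)) * r = -(c i * r); rw [neg_mul]
          rw [this]; exact W.neg_mem hcP.2
    -- the two-sided ideal of values at `i₀`
    let I : TwoSidedIdeal A := TwoSidedIdeal.mk' ((fun c : ι → A => c i₀) '' W)
      ⟨0, W.zero_mem, rfl⟩
      (fun hx hy => by
        obtain ⟨cx, hcx, rfl⟩ := hx; obtain ⟨cy, hcy, rfl⟩ := hy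
        exact ⟨cx + cy, W.add_mem hcx hcy, rfl⟩)
      (fun hx => by
        obtain ⟨cx, hcx, rfl⟩ := hx
        exact ⟨-cx, W.neg_mem hcx, rfl⟩)
      (fun {x y} hy => by
        obtain ⟨cy, hcy, rfl⟩ := hy
        exact ⟨fun i => x * cy i, (hmul x cy hcy).1, rfl⟩)
      (fun {x y} hx => by
        obtain ⟨cx, hcx, rfl⟩ := hx
        exact ⟨fun i => cx i * y, (hmul y cx hcx).2, rfl⟩)
    have haW : a ∈ W := AddSubgroup.subset_closure ⟨1, 1, funext fun i => by simp⟩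
    have h1I : (1 : A) ∈ I :=
      IsSimpleRing.one_mem_of_ne_zero_mem I hi₀
        ((TwoSidedIdeal.mem_mk' _ _ _ _ _ _ _).2 ⟨a, haW, rfl⟩)
    obtain ⟨c, hcW, hc1'⟩ := (TwoSidedIdeal.mem_mk' _ _ _ _ _ _ _).1 h1I
    have hc1 : c i₀ = 1 := hc1'
    obtain ⟨hc0, hcrel⟩ := hmemW c hcW
    -- every `c i` is central
    have hcent : ∀ (b : A) (i : ι), b * c i = c i * b := by
      intro b
      have hzero : ∀ i, b * c i - c i * b = 0 := by
        have := ih (s.erase i₀) (Finset.erase_ssubset hi₀s)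
          (fun i => b * c i - c i * b)
          (by
            intro i hi
            show b * c i - c i * b = 0
            by_cases his : i ∈ s
            · have : i = i₀ := by
                by_contra hne'
                exact hi (Finset.mem_erase.2 ⟨hne', his⟩)
              subst this
              rw [hc1, mul_one, one_mul, sub_self]
            · rw [hc0 i his, mul_zero, zero_mul, sub_zero])
          (by
            intro x
            rw [Finset.sum_erase s (f := fun i => w i * x * (b * c i - c i * b))
              (by show w i₀ * x * (b * c i₀ - c i₀ * b) = 0
                  rw [hc1, mul_one, one_mul, sub_self, mul_zero])]
            have h1 : ∑ i ∈ s, w i * x * (b * c i) = 0 := by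
              have := hcrel (x * b)
              calc ∑ i ∈ s, w i * x * (b * c i)
                  = ∑ i ∈ s, w i * (x * b) * c i :=
                    Finset.sum_congr rfl fun i _ => by simp [mul_assoc]
                _ = 0 := this
            have h2 : ∑ i ∈ s, w i * x * (c i * b) = 0 := by
              calc ∑ i ∈ s, w i * x * (c i * b)
                  = (∑ i ∈ s, w i * x * c i) * b := by
                    rw [Finset.sum_mul]
                    exact Finset.sum_congr rfl fun i _ => by simp [mul_assoc]
                _ = 0 := by rw [hcrel x, zero_mul]
            calc ∑ i ∈ s, w i * x * (b * c i - c i * b)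
                = ∑ i ∈ s, (w i * x * (b * c i) - w i * x * (c i * b)) :=
                  Finset.sum_congr rfl fun i _ => by rw [mul_sub]
              _ = 0 := by rw [Finset.sum_sub_distrib, h1, h2, sub_zero])
        exact this
      intro i
      have := hzero i
      rwa [sub_eq_zero] at this
    have hcF : ∀ i : ι, ∃ l : F, algebraMap F A l = c i := by
      intro i
      have hmem : c i ∈ Subalgebra.center F A :=
        Subalgebra.mem_center_iff.2 fun b => hcent b i
      have := Algebra.IsCentral.out (K := F) (D := A) hmem
      rwa [Algebra.mem_bot] at this
    choose l hl using hcF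
    have hsum : ∑ i ∈ s, l i • w i = 0 := by
      have h1 := hcrel 1
      calc ∑ i ∈ s, l i • w i
          = ∑ i ∈ s, w i * 1 * c i := by
            refine Finset.sum_congr rfl fun i _ => ?_
            rw [mul_one, ← hl i, ← Algebra.commutes (l i) (w i), ← Algebra.smul_def]
        _ = 0 := h1
    have hl0 : l i₀ = 0 := linearIndependent_iff'.1 hw s l hsum i₀ hi₀s
    have : (1 : A) = 0 := by
      rw [← hc1, ← hl i₀, hl0, map_zero]
    exact one_ne_zero this

/-- a commutative subfield `E` (containing `F`) of a finite-dimensional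
central simple `F`-algebra `A` with `dim_F A = (dim_F E)²` is a maximal subfield:
its centralizer in `A` is `E` itself. -/
theorem subfield_of_square_dim_is_maximal
    {F A : Type*} [Field F] [Ring A] [Algebra F A]
    [FiniteDimensional F A] [Algebra.IsCentral F A] [IsSimpleRing A]
    (E : Subalgebra F A)
    (hcomm : ∀ x ∈ E, ∀ y ∈ E, x * y = y * x)
    (hinv : ∀ x ∈ E, x ≠ 0 → ∃ y ∈ E, x * y = 1)
    (hdim : Module.finrank F A = Module.finrank F E ^ 2) :
    Subalgebra.centralizer F (E : Set A) = E := by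
  classical
  refine le_antisymm ?_ (fun x hx => Subalgebra.mem_centralizer_iff F |>.2
    fun g hg => hcomm g hg x hx)
  intro c hc
  rw [Subalgebra.mem_centralizer_iff] at hc
  -- make `E` a field
  letI : CommRing ↥E :=
    { (inferInstance : Ring ↥E) with
      mul_comm := fun x y => Subtype.ext (hcomm x x.2 y y.2) }
  have hF : IsField ↥E := by
    refine ⟨⟨0, 1, zero_ne_one⟩, mul_comm, ?_⟩
    rintro ⟨x, hx⟩ h
    obtain ⟨y, hy, hxy⟩ := hinv x hx (by simpa [Subtype.ext_iff] using h)
    exact ⟨⟨y, hy⟩, Subtype.ext hxy⟩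
  letI : Field ↥E := hF.toField
  haveI : Module.Finite ↥E A := Module.Finite.of_restrictScalars_finite F ↥E A
  have hpos : 0 < finrank F ↥E := finrank_pos
  have hEA : finrank ↥E A = finrank F ↥E := by
    have h1 := Module.finrank_mul_finrank F ↥E A
    rw [hdim, sq] at h1
    exact Nat.eq_of_mul_eq_mul_left hpos h1
  -- bases
  let bE : Basis (Fin (finrank F ↥E)) F ↥E := Module.finBasis F ↥E
  let bA : Basis (Fin (finrank ↥E A)) ↥E A := Module.finBasis ↥E A
  let w : Fin (finrank F ↥E) → A := fun i => (bE i : A)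
  have hw : LinearIndependent F w :=
    bE.linearIndependent.map' E.val.toLinearMap
      (LinearMap.ker_eq_bot.2 Subtype.val_injective)
  -- the map Φ
  have hsmul_def : ∀ (α : ↥E) (x : A), α • x = (α : A) * x := fun _ _ => rfl
  let Φ : (Fin (finrank F ↥E) → A) →ₗ[F] (A →ₗ[↥E] A) :=
    { toFun := fun a =>
        { toFun := fun x => ∑ i, w i * x * a i
          map_add' := fun x y => by
            simp only [mul_add, add_mul, Finset.sum_add_distrib]
          map_smul' := fun α x => by
            simp only [hsmul_def, RingHom.id_apply]
            rw [Finset.mul_sum]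
            refine Finset.sum_congr rfl fun i _ => ?_
            have hcw : w i * (α : A) = (α : A) * w i :=
              hcomm _ (bE i).2 _ α.2
            simp only [← mul_assoc]
            rw [hcw] }
      map_add' := fun a b => LinearMap.ext fun x => by
        show ∑ i, w i * x * (a i + b i) = (∑ i, w i * x * a i) + ∑ i, w i * x * b i
        simp only [mul_add, Finset.sum_add_distrib]
      map_smul' := fun r a => LinearMap.ext fun x => by
        show ∑ i, w i * x * (r • a i) = r • ∑ i, w i * x * a i
        rw [Finset.smul_sum]
        exact Finset.sum_congr rfl fun i _ => (mul_smul_comm r (w i * x) (a i)) }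
  have hker : ∀ a, Φ a = 0 → a = 0 := by
    intro a ha
    funext i
    exact artin_relations hw Finset.univ a (fun j hj => absurd (Finset.mem_univ j) hj)
      (fun x => LinearMap.congr_fun ha x) i
  have hΦinj : Function.Injective Φ := by
    intro x y hxy
    have := hker (x - y) (by rw [map_sub, hxy, sub_self])
    exact sub_eq_zero.1 this
  -- dimension count
  have hpi : ∀ (m : ℕ), finrank F (Fin m → A) = m * finrank F A := fun m => by
    simp [Module.finrank_pi_fintype, Finset.sum_const, Finset.card_univ]
  haveI : FiniteDimensional F (A →ₗ[↥E] A) :=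
    LinearEquiv.finiteDimensional (bA.constr F (M' := A))
  have hdimeq : finrank F (Fin (finrank F ↥E) → A) = finrank F (A →ₗ[↥E] A) := by
    rw [hpi, ← LinearEquiv.finrank_eq (bA.constr F (M' := A)), hpi, hEA]
  have hΦsurj := (LinearMap.injective_iff_surjective_of_finrank_eq_finrank hdimeq).1 hΦinj
  -- left multiplication by c is E-linear
  let L : A →ₗ[↥E] A :=
    { toFun := fun x => c * x
      map_add' := fun x y => mul_add c x y
      map_smul' := fun α x => by
        simp only [hsmul_def, RingHom.id_apply]
        rw [← mul_assoc, ← hc (α : A) α.2, mul_assoc] }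
  obtain ⟨a, ha⟩ := hΦsurj L
  have haval : ∀ x : A, ∑ i, w i * x * a i = c * x := fun x => LinearMap.congr_fun ha x
  -- the coefficients are central
  have hcent : ∀ (b : A) (i), b * a i = a i * b := by
    intro b
    have h0 : Φ (fun i => b * a i - a i * b) = 0 := by
      refine LinearMap.ext fun x => ?_
      show ∑ i, w i * x * (b * a i - a i * b) = 0
      have h1 : ∑ i, w i * x * (b * a i) = c * (x * b) := by
        calc ∑ i, w i * x * (b * a i)
            = ∑ i, w i * (x * b) * a i :=
              Finset.sum_congr rfl fun i _ => by simp [mul_assoc]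
          _ = c * (x * b) := haval (x * b)
      have h2 : ∑ i, w i * x * (a i * b) = (c * x) * b := by
        calc ∑ i, w i * x * (a i * b)
            = (∑ i, w i * x * a i) * b := by
              rw [Finset.sum_mul]
              exact Finset.sum_congr rfl fun i _ => by simp [mul_assoc]
          _ = (c * x) * b := by rw [haval x]
      calc ∑ i, w i * x * (b * a i - a i * b)
          = ∑ i, (w i * x * (b * a i) - w i * x * (a i * b)) :=
            Finset.sum_congr rfl fun i _ => by rw [mul_sub]
        _ = 0 := by rw [Finset.sum_sub_distrib, h1, h2, mul_assoc, sub_self]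
    have := hker _ h0
    intro i
    have h := congrFun this i
    simpa [sub_eq_zero] using h
  have haF : ∀ i, ∃ l : F, algebraMap F A l = a i := by
    intro i
    have hmem : a i ∈ Subalgebra.center F A :=
      Subalgebra.mem_center_iff.2 fun b => hcent b i
    have := Algebra.IsCentral.out (K := F) (D := A) hmem
    rwa [Algebra.mem_bot] at this
  choose l hl using haF
  have hcE : c = ((∑ i, l i • bE i : ↥E) : A) := by
    have h1 := haval 1
    rw [mul_one] at h1
    rw [← h1]
    have : ((∑ i, l i • bE i : ↥E) : A) = ∑ i, l i • (bE i : A) := by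
      simp
    rw [this]
    refine Finset.sum_congr rfl fun i _ => ?_
    rw [mul_one, ← hl i, ← Algebra.commutes (l i) (w i), ← Algebra.smul_def]
  rw [hcE]
  exact SetLike.coe_mem _
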